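/- Let G be an X-graph that contains no two edge-disjoint simple cycles having exactly one crossing vertex. Then every turning Eulerian circuit T of G is strongly turning: traversing T in a fixed direction, the two entries of T into any vertex use half-edges of the same pair of the partition at that vertex. -/

import Mathlib

/-- A multigraph: vertices, edges, and for each edge its (ordered) pair of ends. -/
structure Multigraph where
  V : Type
  E : Type
  ends : E → V × V

namespace Multigraph

variable (G : Multigraph)

/-- A half-edge is a pair (edge, chosen end); `hvtx` is the vertex at that end. -/
def hvtx (h : G.E × Bool) : G.V :=
  if h.2 then (G.ends h.1).1 else (G.ends h.1).2

/-- `G` is 4-regular: every vertex has exactly four incident half-edges. -/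
def FourRegular : Prop :=
  ∀ v : G.V, {h : G.E × Bool | G.hvtx h = v}.ncard = 4

def adj (v w : G.V) : Prop :=
  ∃ e : G.E, G.ends e = (v, w) ∨ G.ends e = (w, v)

def Conn : Prop := ∀ v w : G.V, Relation.ReflTransGen G.adj v w

/-- A closed walk of length `n`, given as a cyclic sequence of darts.
The dart `(e, b)` is traversed from `hvtx (e, b)` to `hvtx (e, !b)`. -/
structure ClosedWalk (n : ℕ) where
  dart : ZMod n → G.E × Bool
  compat : ∀ i, G.hvtx (dart (i + 1)) = G.hvtx ((dart i).1, !(dart i).2)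

variable {G}

namespace ClosedWalk

variable {n : ℕ} (w : G.ClosedWalk n)

/-- The vertex visited at step `i` (tail of the `i`-th dart). -/
def vtx (i : ZMod n) : G.V := G.hvtx (w.dart i)

/-- The half-edge along which the walk enters the vertex visited at step `i`. -/
def enter (i : ZMod n) : G.E × Bool := ((w.dart (i - 1)).1, !(w.dart (i - 1)).2)

/-- The half-edge along which the walk leaves the vertex visited at step `i`. -/
def leave (i : ZMod n) : G.E × Bool := w.dart i

def edges : Set G.E := {e | ∃ i, (w.dart i).1 = e}

def Visits (v : G.V) : Prop := ∃ i, w.vtx i = v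

/-- A (closed) trail: no repeated edges. -/
def IsTrail : Prop := Function.Injective fun i => (w.dart i).1

/-- An Eulerian circuit: every edge is traversed exactly once. -/
def IsEulerian : Prop := ∀ e : G.E, ∃! i, (w.dart i).1 = e

/-- A simple (non-self-intersecting) cycle: no repeated vertices. -/
def IsSimple : Prop := Function.Injective w.vtx

end ClosedWalk

def EdgeDisjoint {n m : ℕ} (w₁ : G.ClosedWalk n) (w₂ : G.ClosedWalk m) : Prop :=
  ∀ e, e ∈ w₁.edges → e ∉ w₂.edges

variable (G)

/-- A crossing structure: at each vertex, the four incident half-edges are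
partitioned into two pairs, recorded by a `Bool`-labelling `p` such that each
label class at each vertex has exactly two half-edges. -/
structure XStructure where
  p : G.E × Bool → Bool
  pairs : ∀ (v : G.V) (b : Bool), {h : G.E × Bool | G.hvtx h = v ∧ p h = b}.ncard = 2

variable {G}

/-- `v` is a crossing vertex of two (edge-disjoint) closed walks: one walk has a
passage through `v` using both half-edges of one pair, and the other walk has a
passage through `v` using both half-edges of the other pair. -/
def CrossingVertex (X : XStructure G) {n m : ℕ}
    (w₁ : G.ClosedWalk n) (w₂ : G.ClosedWalk m) (v : G.V) : Prop :=
  ∃ i j, w₁.vtx i = v ∧ w₂.vtx j = v ∧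
    X.p (w₁.enter i) = X.p (w₁.leave i) ∧
    X.p (w₂.enter j) = X.p (w₂.leave j) ∧
    X.p (w₁.leave i) ≠ X.p (w₂.leave j)

/-- A closed walk is turning if at each passage through a vertex it enters and
leaves along half-edges of different pairs. -/
def Turning (X : XStructure G) {n : ℕ} (w : G.ClosedWalk n) : Prop :=
  ∀ i, X.p (w.enter i) ≠ X.p (w.leave i)

/-- Strongly turning: turning, and the entries into any given vertex always use
half-edges of the same pair. -/
def StronglyTurning (X : XStructure G) {n : ℕ} (w : G.ClosedWalk n) : Prop :=
  Turning X w ∧ ∀ i j, w.vtx i = w.vtx j → X.p (w.enter i) = X.p (w.enter j)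

/-- Vertices `P ≠ Q` are interlaced with respect to a closed walk if their
occurrences appear along the walk in cyclic order `P Q P Q`. -/
def Interlaced {n : ℕ} (w : G.ClosedWalk n) (P Q : G.V) : Prop :=
  P ≠ Q ∧ ∃ a b c d : ZMod n, a.val < b.val ∧ b.val < c.val ∧ c.val < d.val ∧
    ((w.vtx a = P ∧ w.vtx b = Q ∧ w.vtx c = P ∧ w.vtx d = Q) ∨
     (w.vtx a = Q ∧ w.vtx b = P ∧ w.vtx c = Q ∧ w.vtx d = P))

/-- A closed walk is convenient if the vertices can be split into two sets with
no two vertices in the same set interlaced. -/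
def Convenient {n : ℕ} (w : G.ClosedWalk n) : Prop :=
  ∃ f : G.V → Bool, ∀ P Q, Interlaced w P Q → f P ≠ f Q

/-- The interlacement graph `Q(T)` of a closed walk `T`. -/
def interlacementGraph {n : ℕ} (w : G.ClosedWalk n) : SimpleGraph G.V :=
  SimpleGraph.fromRel (Interlaced w)

variable (G)

/-- An embedding of a multigraph in the plane: points for vertices, injective
continuous curves for edges, meeting only as prescribed by incidence. -/
structure PlaneEmb where
  vmap : G.V → ℝ × ℝ
  emap : G.E → unitInterval → ℝ × ℝ
  vinj : Function.Injective vmap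
  cont : ∀ e, Continuous (emap e)
  einj : ∀ e, Function.Injective (emap e)
  ends₀ : ∀ e, emap e 0 = vmap (G.ends e).1
  ends₁ : ∀ e, emap e 1 = vmap (G.ends e).2
  interior_vtx : ∀ e t, t ≠ 0 → t ≠ 1 → emap e t ∉ Set.range vmap
  edge_disj : ∀ e e', e ≠ e' → ∀ t t', emap e t = emap e' t' →
    emap e t ∈ Set.range vmap

/-- `G` is planar if it admits a plane embedding. -/
def Planar : Prop := Nonempty (PlaneEmb G)

variable {G}

/-- The curve of a half-edge, reparametrized to start at its vertex. -/
def PlaneEmb.curve (φ : PlaneEmb G) (h : G.E × Bool) (s : unitInterval) : ℝ × ℝ :=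
  φ.emap h.1 (if h.2 then s else unitInterval.symm s)

/-- The point on the circle of radius `r` around `c` at angle `θ`. -/
noncomputable def onCircle (c : ℝ × ℝ) (r θ : ℝ) : ℝ × ℝ :=
  (c.1 + r * Real.cos θ, c.2 + r * Real.sin θ)

/-- At `v`, the plane embedding `φ` makes the two pairs of the crossing
structure alternate in the cyclic order around `v`: on every sufficiently small
circle around `v`, one can choose initial points of the four half-edge curves
appearing at angles in the alternating order pair 1, pair 2, pair 1, pair 2. -/
def PlaneEmb.AlternatingAt (φ : PlaneEmb G) (X : XStructure G) (v : G.V) : Prop :=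
  ∃ r0 > 0, ∀ r, 0 < r → r < r0 →
    ∃ a b c d : G.E × Bool,
      a ≠ b ∧ a ≠ c ∧ a ≠ d ∧ b ≠ c ∧ b ≠ d ∧ c ≠ d ∧
      G.hvtx a = v ∧ G.hvtx b = v ∧ G.hvtx c = v ∧ G.hvtx d = v ∧
      X.p a = X.p c ∧ X.p b = X.p d ∧ X.p a ≠ X.p b ∧
      ∃ θa θb θc θd : ℝ, θa < θb ∧ θb < θc ∧ θc < θd ∧ θd < θa + 2 * Real.pi ∧
      ∃ sa sb sc sd : unitInterval, sa ≠ 0 ∧ sb ≠ 0 ∧ sc ≠ 0 ∧ sd ≠ 0 ∧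
        φ.curve a sa = onCircle (φ.vmap v) r θa ∧
        φ.curve b sb = onCircle (φ.vmap v) r θb ∧
        φ.curve c sc = onCircle (φ.vmap v) r θc ∧
        φ.curve d sd = onCircle (φ.vmap v) r θd ∧
        (∀ s ≤ sa, dist (φ.curve a s) (φ.vmap v) ≤ r) ∧
        (∀ s ≤ sb, dist (φ.curve b s) (φ.vmap v) ≤ r) ∧
        (∀ s ≤ sc, dist (φ.curve c s) (φ.vmap v) ≤ r) ∧
        (∀ s ≤ sd, dist (φ.curve d s) (φ.vmap v) ≤ r)

variable (G)

/-- `G` with crossing structure `X` is X-planar: it admits a plane embedding in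
which the two pairs of half-edges alternate around every vertex. -/
def XPlanar (X : XStructure G) : Prop :=
  ∃ φ : PlaneEmb G, ∀ v : G.V, φ.AlternatingAt X v

variable {G}

end Multigraph


section Aux

open Multigraph

lemma zmod_cast_val {n : ℕ} [NeZero n] (a : ZMod n) : ((a.val : ℕ) : ZMod n) = a :=
  ZMod.natCast_rightInverse a

lemma zmod_val_inj {n : ℕ} [NeZero n] {a b : ZMod n} (h : a.val = b.val) : a = b := by
  rw [← zmod_cast_val a, ← zmod_cast_val b, h]

lemma zmod_cast_inj {n : ℕ} {x y : ℕ} (hx : x < n) (hy : y < n)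
    (h : (x : ZMod n) = (y : ZMod n)) : x = y := by
  haveI : NeZero n := ⟨(Nat.pos_of_ne_zero (by omega)).ne'⟩
  have := congrArg ZMod.val h
  rwa [ZMod.val_cast_of_lt hx, ZMod.val_cast_of_lt hy] at this

lemma zmod_add_one_val {m : ℕ} [NeZero m] (k : ZMod m) (h : k.val + 1 < m) :
    (k + 1).val = k.val + 1 := by
  conv_lhs => rw [← zmod_cast_val k]
  rw [show ((k.val : ℕ) : ZMod m) + 1 = ((k.val + 1 : ℕ) : ZMod m) by push_cast; ring]
  exact ZMod.val_cast_of_lt h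

lemma zmod_add_one_zero {m : ℕ} [NeZero m] (k : ZMod m) (h : k.val + 1 = m) :
    k + 1 = 0 := by
  rw [← zmod_cast_val k,
    show ((k.val : ℕ) : ZMod m) + 1 = ((k.val + 1 : ℕ) : ZMod m) by push_cast; ring, h,
    ZMod.natCast_self]

lemma zmod_sub_one {m : ℕ} [NeZero m] (k : ZMod m) (h : k ≠ 0) :
    k - 1 = ((k.val - 1 : ℕ) : ZMod m) := by
  have h0 : k.val ≠ 0 := fun hh => h ((ZMod.val_eq_zero k).mp hh)
  have h1 : ((k.val - 1 : ℕ) : ZMod m) + 1 = k := by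
    rw [show ((k.val - 1 : ℕ) : ZMod m) + 1 = ((k.val - 1 + 1 : ℕ) : ZMod m) by push_cast; ring,
      Nat.sub_add_cancel (Nat.one_le_iff_ne_zero.mpr h0), zmod_cast_val]
  conv_lhs => rw [← h1]
  ring

lemma zmod_sub_one_val {m : ℕ} [NeZero m] (k : ZMod m) (h : k ≠ 0) :
    (k - 1).val = k.val - 1 := by
  rw [zmod_sub_one k h]
  exact ZMod.val_cast_of_lt (lt_of_le_of_lt (Nat.sub_le _ _) (ZMod.val_lt k))

lemma zmod_zero_sub_one {m : ℕ} (hm : 0 < m) : (0 - 1 : ZMod m) = ((m - 1 : ℕ) : ZMod m) := by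
  haveI : NeZero m := ⟨hm.ne'⟩
  have h1 : ((m - 1 : ℕ) : ZMod m) + 1 = 0 := by
    rw [show ((m - 1 : ℕ) : ZMod m) + 1 = ((m - 1 + 1 : ℕ) : ZMod m) by push_cast; ring,
      Nat.sub_add_cancel hm, ZMod.natCast_self]
  conv_lhs => rw [← h1]
  ring

namespace Multigraph

variable {G : Multigraph}

namespace ClosedWalk

variable {n : ℕ} (w : G.ClosedWalk n)

lemma hvtx_enter (i : ZMod n) : G.hvtx (w.enter i) = w.vtx i := by
  have := (w.compat (i - 1)).symm
  simpa [enter, vtx] using this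

lemma hvtx_leave (i : ZMod n) : G.hvtx (w.leave i) = w.vtx i := rfl

lemma eul_inj (hE : w.IsEulerian) : Function.Injective fun i => (w.dart i).1 := by
  intro a b hab
  obtain ⟨c, _, hc⟩ := hE (w.dart b).1
  exact (hc a hab).trans (hc b rfl).symm

lemma enter_ne_enter (hE : w.IsEulerian) {i j : ZMod n} (h : i ≠ j) :
    w.enter i ≠ w.enter j := by
  intro he
  have h1 : (w.dart (i - 1)).1 = (w.dart (j - 1)).1 := by
    have := congrArg Prod.fst he
    simpa [enter] using this
  exact h (sub_left_injective (w.eul_inj hE h1))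


lemma leave_ne_leave (hE : w.IsEulerian) {i j : ZMod n} (h : i ≠ j) :
    w.leave i ≠ w.leave j := by
  intro he
  exact h (w.eul_inj hE (congrArg Prod.fst he))

lemma enter_ne_leave (hE : w.IsEulerian) (i j : ZMod n) :
    w.enter i ≠ w.leave j := by
  intro he
  have h1 : (w.dart (i - 1)).1 = (w.dart j).1 := by
    have := congrArg Prod.fst he
    simpa [enter, leave] using this
  have h2 : i - 1 = j := w.eul_inj hE h1
  have h3 : (!(w.dart (i - 1)).2) = (w.dart j).2 := by
    have := congrArg Prod.snd he
    simpa [enter, leave] using this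
  rw [h2] at h3
  simp at h3

/-- A 4-regular multigraph's Eulerian circuit visits each vertex at most twice. -/
lemma visits_le_two (hreg : G.FourRegular) (hE : w.IsEulerian) {u : G.V}
    {k₁ k₂ k₃ : ZMod n} (h12 : k₁ ≠ k₂) (h13 : k₁ ≠ k₃) (h23 : k₂ ≠ k₃)
    (hv1 : w.vtx k₁ = u) (hv2 : w.vtx k₂ = u) (hv3 : w.vtx k₃ = u) : False := by
  classical
  set S : Set (G.E × Bool) :=
    {w.enter k₁, w.enter k₂, w.enter k₃, w.leave k₁, w.leave k₂, w.leave k₃} with hS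
  have hsub : S ⊆ {h : G.E × Bool | G.hvtx h = u} := by
    intro x hx
    simp only [hS, Set.mem_insert_iff, Set.mem_singleton_iff] at hx
    rcases hx with h | h | h | h | h | h <;> subst h <;>
      simp only [Set.mem_setOf_eq, hvtx_enter, hvtx_leave] <;> assumption
  have hfin : ({h : G.E × Bool | G.hvtx h = u}).Finite := by
    by_contra hinf
    have := Set.Infinite.ncard hinf
    rw [hreg u] at this
    omega
  have hle : S.ncard ≤ 4 := by
    rw [← hreg u]
    exact Set.ncard_le_ncard hsub hfin
  have hcard : S.ncard = 6 := by
    have e12 := w.enter_ne_enter hE h12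
    have e13 := w.enter_ne_enter hE h13
    have e23 := w.enter_ne_enter hE h23
    have l12 := w.leave_ne_leave hE h12
    have l13 := w.leave_ne_leave hE h13
    have l23 := w.leave_ne_leave hE h23
    have el : ∀ i j : ZMod n, w.enter i ≠ w.leave j := w.enter_ne_leave hE
    rw [hS]
    rw [Set.ncard_insert_of_notMem (by simp [e12, e13, el]) (Set.toFinite _)]
    rw [Set.ncard_insert_of_notMem (by simp [e23, el]) (Set.toFinite _)]
    rw [Set.ncard_insert_of_notMem (by simp [el]) (Set.toFinite _)]
    rw [Set.ncard_insert_of_notMem (by simp [l12, l13]) (Set.toFinite _)]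
    rw [Set.ncard_insert_of_notMem (by simp [l23]) (Set.toFinite _)]
    rw [Set.ncard_singleton]
  omega

end ClosedWalk

/-- The segment of a closed walk starting at index `i`, of length `d`. -/
def ClosedWalk.seg {N : ℕ} (T : G.ClosedWalk N) (i : ZMod N) (d : ℕ) (hd : 0 < d)
    (hw : T.vtx (i + (d : ZMod N)) = T.vtx i) : G.ClosedWalk d where
  dart k := T.dart (i + ((k.val : ℕ) : ZMod N))
  compat k := by
    haveI : NeZero d := ⟨hd.ne'⟩
    show G.hvtx (T.dart (i + (((k + 1 : ZMod d).val : ℕ) : ZMod N)))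
        = G.hvtx ((T.dart (i + ((k.val : ℕ) : ZMod N))).1, !(T.dart (i + ((k.val : ℕ) : ZMod N))).2)
    rcases lt_or_eq_of_le (Nat.succ_le_of_lt (ZMod.val_lt k)) with h | h
    · rw [zmod_add_one_val k h]
      have : i + ((k.val + 1 : ℕ) : ZMod N) = i + ((k.val : ℕ) : ZMod N) + 1 := by
        push_cast; ring
      rw [this]
      exact T.compat _
    · rw [zmod_add_one_zero k h]
      have h0 : ((0 : ZMod d).val : ZMod N) = (0 : ZMod N) := by simp
      rw [h0, add_zero]
      have hk : k.val = d - 1 := by omega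
      have hstep := T.compat (i + ((d - 1 : ℕ) : ZMod N))
      have harg : i + ((d - 1 : ℕ) : ZMod N) + 1 = i + ((d : ℕ) : ZMod N) := by
        rw [show ((d : ℕ) : ZMod N) = ((d - 1 + 1 : ℕ) : ZMod N) by rw [Nat.sub_add_cancel hd]]
        push_cast; ring
      rw [harg] at hstep
      rw [hk]
      have hw' : G.hvtx (T.dart (i + ((d : ℕ) : ZMod N))) = G.hvtx (T.dart i) := hw
      rw [← hw']
      exact hstep

namespace ClosedWalk

variable {N : ℕ} (T : G.ClosedWalk N) (i : ZMod N) (d : ℕ) (hd : 0 < d)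
  (hw : T.vtx (i + (d : ZMod N)) = T.vtx i)

lemma seg_vtx (k : ZMod d) : (T.seg i d hd hw).vtx k = T.vtx (i + ((k.val : ℕ) : ZMod N)) := rfl

lemma seg_leave (k : ZMod d) : (T.seg i d hd hw).leave k = T.leave (i + ((k.val : ℕ) : ZMod N)) := rfl

lemma seg_vtx_zero : (T.seg i d hd hw).vtx 0 = T.vtx i := by
  haveI : NeZero d := ⟨hd.ne'⟩
  rw [seg_vtx]
  simp

lemma seg_leave_zero : (T.seg i d hd hw).leave 0 = T.leave i := by
  haveI : NeZero d := ⟨hd.ne'⟩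
  rw [seg_leave]
  simp [leave]

lemma seg_enter_zero : (T.seg i d hd hw).enter 0 = T.enter (i + (d : ZMod N)) := by
  haveI : NeZero d := ⟨hd.ne'⟩
  show (((T.seg i d hd hw).dart (0 - 1)).1, !((T.seg i d hd hw).dart (0 - 1)).2)
      = ((T.dart (i + (d : ZMod N) - 1)).1, !(T.dart (i + (d : ZMod N) - 1)).2)
  have h1 : ((0 - 1 : ZMod d).val : ZMod N) = ((d - 1 : ℕ) : ZMod N) := by
    rw [zmod_zero_sub_one hd, ZMod.val_cast_of_lt (by omega : d - 1 < d)]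
  have h2 : i + ((d - 1 : ℕ) : ZMod N) = i + (d : ZMod N) - 1 := by
    rw [show ((d : ℕ) : ZMod N) = ((d - 1 + 1 : ℕ) : ZMod N) by rw [Nat.sub_add_cancel hd]]
    push_cast; ring
  show ((T.dart (i + ((0 - 1 : ZMod d).val : ZMod N))).1, !(T.dart (i + ((0 - 1 : ZMod d).val : ZMod N))).2) = _
  rw [h1, h2]

lemma seg_enter (k : ZMod d) (hk : k ≠ 0) :
    (T.seg i d hd hw).enter k = T.enter (i + ((k.val : ℕ) : ZMod N)) := by
  haveI : NeZero d := ⟨hd.ne'⟩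
  have h0 : k.val ≠ 0 := fun hh => hk ((ZMod.val_eq_zero k).mp hh)
  have h1 : ((k - 1 : ZMod d).val : ZMod N) = ((k.val - 1 : ℕ) : ZMod N) := by
    rw [zmod_sub_one_val k hk]
  have h2 : i + ((k.val - 1 : ℕ) : ZMod N) = i + ((k.val : ℕ) : ZMod N) - 1 := by
    rw [show ((k.val : ℕ) : ZMod N) = ((k.val - 1 + 1 : ℕ) : ZMod N) by
      rw [Nat.sub_add_cancel (Nat.one_le_iff_ne_zero.mpr h0)]]
    push_cast; ring
  show ((T.dart (i + ((k - 1 : ZMod d).val : ZMod N))).1, !(T.dart (i + ((k - 1 : ZMod d).val : ZMod N))).2) = _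
  rw [h1, h2]
  rfl

lemma seg_edges {e : G.E} (he : e ∈ (T.seg i d hd hw).edges) :
    ∃ k : ZMod d, (T.dart (i + ((k.val : ℕ) : ZMod N))).1 = e := he

end ClosedWalk

end Multigraph

/-- Cast-subtraction helper. -/
lemma natcast_sub_one {n : ℕ} (x : ℕ) (hx : 1 ≤ x) :
    ((x - 1 : ℕ) : ZMod n) = ((x : ℕ) : ZMod n) - 1 := by
  rw [Nat.cast_sub hx]; norm_num

/-- Cut a single loop out of a closed walk, preserving the distinguished passage at 0. -/
lemma cutStep {G : Multigraph} {n : ℕ} (hn : 0 < n) (w : G.ClosedWalk n) (v : G.V)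
    (hv0 : w.vtx 0 = v) (huniq : ∀ k, w.vtx k = v → k = 0)
    {a b : ZMod n} (hvab : w.vtx a = w.vtx b) (hAB : a.val < b.val) :
    ∃ m, 0 < m ∧ m < n ∧ ∃ w' : G.ClosedWalk m,
      (∀ e, e ∈ w'.edges → e ∈ w.edges) ∧
      w'.vtx 0 = v ∧ w'.enter 0 = w.enter 0 ∧ w'.leave 0 = w.leave 0 ∧
      (∀ k, w'.vtx k = v → k = 0) ∧
      ∀ k : ZMod m, k ≠ 0 →
        (∃ l : ZMod n, l ≠ 0 ∧ w.vtx l = w'.vtx k ∧ w'.enter k = w.enter l) ∧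
        (∃ l : ZMod n, l ≠ 0 ∧ w.vtx l = w'.vtx k ∧ w'.leave k = w.leave l) := by
  haveI : NeZero n := ⟨hn.ne'⟩
  have hb0 : b ≠ 0 := by
    intro h
    subst h
    simp [ZMod.val_zero] at hAB
  have ha0 : a ≠ 0 := by
    intro h
    subst h
    exact hb0 (huniq b (by rw [← hvab, hv0]))
  set A := a.val with hA
  set B := b.val with hB
  have hApos : 0 < A := Nat.pos_of_ne_zero (fun h => ha0 ((ZMod.val_eq_zero a).mp h))
  have hBn : B < n := ZMod.val_lt b
  set d := B - A with hdd
  set m := n - d with hmm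
  have hd : 0 < d := by omega
  have hm : 0 < m := by omega
  have hmn : m < n := by omega
  have hAm : A < m := by omega
  haveI : NeZero m := ⟨hm.ne'⟩
  set oldn : ℕ → ℕ := fun x => if x < A then x else x + d with holdn
  have hold_lt : ∀ x, x < m → oldn x < n := by
    intro x hx
    simp only [holdn]
    split <;> omega
  have hold_zero : ∀ x, x < m → ((oldn x : ℕ) : ZMod n) = 0 → x = 0 := by
    intro x hx h0
    have := zmod_cast_inj (hold_lt x hx) hn ((by simpa using h0))
    simp only [holdn] at this
    revert this
    split <;> omega
  have hold0 : oldn 0 = 0 := by simp only [holdn]; split <;> omega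
  have hcompat : ∀ k : ZMod m,
      G.hvtx (w.dart ((oldn (k + 1).val : ℕ) : ZMod n))
        = G.hvtx ((w.dart ((oldn k.val : ℕ) : ZMod n)).1, !(w.dart ((oldn k.val : ℕ) : ZMod n)).2) := by
    intro k
    rcases lt_or_eq_of_le (Nat.succ_le_of_lt (ZMod.val_lt k)) with h1 | h1
    · -- no wrap
      rw [zmod_add_one_val k h1]
      rcases lt_trichotomy (k.val + 1) A with h2 | h2 | h2
      · -- both small
        have e1 : oldn (k.val + 1) = k.val + 1 := by simp only [holdn]; split <;> omega
        have e2 : oldn k.val = k.val := by simp only [holdn]; split <;> omega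
        rw [e1, e2]
        have := w.compat ((k.val : ℕ) : ZMod n)
        rwa [show ((k.val : ℕ) : ZMod n) + 1 = ((k.val + 1 : ℕ) : ZMod n) by push_cast; ring] at this
      · -- splice: k.val + 1 = A
        have e1 : oldn (k.val + 1) = B := by simp only [holdn]; split <;> omega
        have e2 : oldn k.val = A - 1 := by simp only [holdn]; split <;> omega
        rw [e1, e2]
        have hvb : G.hvtx (w.dart ((B : ℕ) : ZMod n)) = G.hvtx (w.dart ((A : ℕ) : ZMod n)) := by
          rw [hB, hA, zmod_cast_val, zmod_cast_val]
          exact hvab.symm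
        rw [hvb]
        have := w.compat ((A - 1 : ℕ) : ZMod n)
        rwa [show ((A - 1 : ℕ) : ZMod n) + 1 = ((A : ℕ) : ZMod n) by
          rw [show (A : ℕ) = (A - 1) + 1 by omega]; push_cast; ring] at this
      · -- both large
        have e1 : oldn (k.val + 1) = k.val + 1 + d := by simp only [holdn]; split <;> omega
        have e2 : oldn k.val = k.val + d := by simp only [holdn]; split <;> omega
        rw [e1, e2]
        have := w.compat ((k.val + d : ℕ) : ZMod n)
        rwa [show ((k.val + d : ℕ) : ZMod n) + 1 = ((k.val + 1 + d : ℕ) : ZMod n) by push_cast; ring] at this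
    · -- wrap: k.val + 1 = m
      rw [zmod_add_one_zero k h1]
      have hzv : (0 : ZMod m).val = 0 := ZMod.val_zero
      rw [hzv, hold0]
      have e2 : oldn k.val = n - 1 := by simp only [holdn]; split <;> omega
      rw [e2]
      have := w.compat ((n - 1 : ℕ) : ZMod n)
      rwa [show ((n - 1 : ℕ) : ZMod n) + 1 = ((0 : ℕ) : ZMod n) by
        rw [show ((n - 1 : ℕ) : ZMod n) + 1 = ((n - 1 + 1 : ℕ) : ZMod n) by push_cast; ring,
          Nat.sub_add_cancel hn, ZMod.natCast_self]; norm_num] at this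
  set w' : G.ClosedWalk m := ⟨fun k => w.dart ((oldn k.val : ℕ) : ZMod n), hcompat⟩ with hw'
  have hdart : ∀ k : ZMod m, w'.dart k = w.dart ((oldn k.val : ℕ) : ZMod n) := fun _ => rfl
  have hvtx' : ∀ k : ZMod m, w'.vtx k = w.vtx ((oldn k.val : ℕ) : ZMod n) := fun _ => rfl
  have hleave' : ∀ k : ZMod m, w'.leave k = w.leave ((oldn k.val : ℕ) : ZMod n) := fun _ => rfl
  -- enter at nonzero non-splice indices and at the splice
  have hzsub : (0 - 1 : ZMod m).val = m - 1 := by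
    rw [zmod_zero_sub_one hm, ZMod.val_cast_of_lt (by omega : m - 1 < m)]
  have henter0 : w'.enter 0 = w.enter 0 := by
    show ((w'.dart (0 - 1)).1, !(w'.dart (0 - 1)).2) = ((w.dart (0 - 1)).1, !(w.dart (0 - 1)).2)
    rw [hdart, hzsub]
    have e2 : oldn (m - 1) = n - 1 := by simp only [holdn]; split <;> omega
    rw [e2, show ((n - 1 : ℕ) : ZMod n) = 0 - 1 by rw [zmod_zero_sub_one hn]]
  have henter' : ∀ k : ZMod m, k ≠ 0 → k.val ≠ A →
      w'.enter k = w.enter ((oldn k.val : ℕ) : ZMod n) := by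
    intro k hk hkA
    have h0 : k.val ≠ 0 := fun hh => hk ((ZMod.val_eq_zero k).mp hh)
    show ((w'.dart (k - 1)).1, !(w'.dart (k - 1)).2)
        = ((w.dart (((oldn k.val : ℕ) : ZMod n) - 1)).1, !(w.dart (((oldn k.val : ℕ) : ZMod n) - 1)).2)
    rw [hdart, zmod_sub_one_val k hk]
    have e1 : oldn (k.val - 1) = oldn k.val - 1 := by simp only [holdn]; split <;> split <;> omega
    have e2 : 1 ≤ oldn k.val := by simp only [holdn]; split <;> omega
    rw [e1, natcast_sub_one _ e2]
  have henterA : ∀ k : ZMod m, k.val = A → w'.enter k = w.enter a := by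
    intro k hkA
    have hk : k ≠ 0 := by
      intro h
      rw [h, ZMod.val_zero] at hkA
      omega
    show ((w'.dart (k - 1)).1, !(w'.dart (k - 1)).2) = ((w.dart (a - 1)).1, !(w.dart (a - 1)).2)
    rw [hdart, zmod_sub_one_val k hk, hkA]
    have e1 : oldn (A - 1) = A - 1 := by simp only [holdn]; split <;> omega
    rw [e1, show a = ((A : ℕ) : ZMod n) from (zmod_cast_val a).symm,
      ← natcast_sub_one A hApos]
  refine ⟨m, hm, hmn, w', ?_, ?_, henter0, ?_, ?_, ?_⟩
  · rintro e ⟨k, hk⟩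
    exact ⟨_, hk⟩
  · rw [hvtx']
    rw [ZMod.val_zero, hold0]
    simpa using hv0
  · rw [hleave']
    rw [ZMod.val_zero, hold0]
    norm_num
  · intro k hk
    have := huniq _ (by rw [← hvtx' k]; exact hk)
    exact (ZMod.val_eq_zero k).mp (hold_zero k.val (ZMod.val_lt k) (by rw [this]))
  · intro k hk
    constructor
    · by_cases hkA : k.val = A
      · refine ⟨a, ha0, ?_, henterA k hkA⟩
        rw [hvtx', hkA]
        have e1 : oldn A = B := by simp only [holdn]; split <;> omega
        rw [e1, hvab, hB, zmod_cast_val]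
      · refine ⟨((oldn k.val : ℕ) : ZMod n), ?_, rfl, henter' k hk hkA⟩
        intro h0
        exact hk ((ZMod.val_eq_zero k).mp (hold_zero k.val (ZMod.val_lt k) h0))
    · refine ⟨((oldn k.val : ℕ) : ZMod n), ?_, rfl, hleave' k⟩
      intro h0
      exact hk ((ZMod.val_eq_zero k).mp (hold_zero k.val (ZMod.val_lt k) h0))

/-- Simplify a closed walk to a simple cycle, preserving the distinguished passage at 0
and keeping all other passages among the passages of the original walk. -/
lemma simplify {G : Multigraph} : ∀ (n : ℕ), 0 < n → ∀ (w : G.ClosedWalk n) (v : G.V),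
    w.vtx 0 = v → (∀ k, w.vtx k = v → k = 0) →
    ∃ (m : ℕ), 0 < m ∧ ∃ c : G.ClosedWalk m,
      c.IsSimple ∧ (∀ e, e ∈ c.edges → e ∈ w.edges) ∧
      c.vtx 0 = v ∧ c.enter 0 = w.enter 0 ∧ c.leave 0 = w.leave 0 ∧
      ∀ k : ZMod m, k ≠ 0 →
        (∃ l : ZMod n, l ≠ 0 ∧ w.vtx l = c.vtx k ∧ c.enter k = w.enter l) ∧
        (∃ l : ZMod n, l ≠ 0 ∧ w.vtx l = c.vtx k ∧ c.leave k = w.leave l) := by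
  intro n
  induction n using Nat.strong_induction_on with
  | _ n IH =>
    intro hn w v hv0 huniq
    by_cases hs : w.IsSimple
    · exact ⟨n, hn, w, hs, fun e he => he, hv0, rfl, rfl,
        fun k hk => ⟨⟨k, hk, rfl, rfl⟩, ⟨k, hk, rfl, rfl⟩⟩⟩
    · haveI : NeZero n := ⟨hn.ne'⟩
      obtain ⟨a, b, hvab, hab⟩ := Function.not_injective_iff.mp hs
      have hcut : ∃ m, 0 < m ∧ m < n ∧ ∃ w' : G.ClosedWalk m,
          (∀ e, e ∈ w'.edges → e ∈ w.edges) ∧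
          w'.vtx 0 = v ∧ w'.enter 0 = w.enter 0 ∧ w'.leave 0 = w.leave 0 ∧
          (∀ k, w'.vtx k = v → k = 0) ∧
          ∀ k : ZMod m, k ≠ 0 →
            (∃ l : ZMod n, l ≠ 0 ∧ w.vtx l = w'.vtx k ∧ w'.enter k = w.enter l) ∧
            (∃ l : ZMod n, l ≠ 0 ∧ w.vtx l = w'.vtx k ∧ w'.leave k = w.leave l) := by
        rcases lt_trichotomy a.val b.val with hlt | heq | hgt
        · exact cutStep hn w v hv0 huniq hvab hlt
        · exact absurd (zmod_val_inj heq) hab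
        · exact cutStep hn w v hv0 huniq hvab.symm hgt
      obtain ⟨m, hm, hmn, w', hed, hv0', he0', hl0', huniq', hpass'⟩ := hcut
      obtain ⟨m', hm', c, hsimp, hedc, hcv0, hce0, hcl0, hcpass⟩ :=
        IH m hmn hm w' v hv0' huniq'
      refine ⟨m', hm', c, hsimp, fun e he => hed e (hedc e he), hcv0,
        hce0.trans he0', hcl0.trans hl0', ?_⟩
      intro k hk
      obtain ⟨⟨l, hl0, hlv, hle⟩, ⟨l', hl'0, hl'v, hl'l⟩⟩ := hcpass k hk
      obtain ⟨⟨l₂, hl₂0, hl₂v, hl₂e⟩, -⟩ := hpass' l hl0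
      obtain ⟨-, ⟨l₂', hl₂'0, hl₂'v, hl₂'l⟩⟩ := hpass' l' hl'0
      exact ⟨⟨l₂, hl₂0, hl₂v.trans hlv, hle.trans hl₂e⟩,
        ⟨l₂', hl₂'0, hl₂'v.trans hl'v, hl'l.trans hl₂'l⟩⟩

end Aux

open Multigraph in
/-- If an X-graph has no two edge-disjoint simple cycles with
exactly one crossing vertex, then every turning Eulerian circuit is strongly
turning. -/
theorem statement4 (G : Multigraph) (X : G.XStructure) (hreg : G.FourRegular)
    (hno : ¬ ∃ (n m : ℕ), 0 < n ∧ 0 < m ∧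
      ∃ (c₁ : G.ClosedWalk n) (c₂ : G.ClosedWalk m),
        c₁.IsSimple ∧ c₂.IsSimple ∧ EdgeDisjoint c₁ c₂ ∧
        ∃! v, CrossingVertex X c₁ c₂ v)
    {N : ℕ} (hN : 0 < N) (T : G.ClosedWalk N)
    (hE : T.IsEulerian) (ht : Turning X T) :
    StronglyTurning X T := by
  classical
  haveI : NeZero N := ⟨hN.ne'⟩
  refine ⟨ht, ?_⟩
  by_contra hcon
  push_neg at hcon
  obtain ⟨i, j, hv, hp⟩ := hcon
  have hij : i ≠ j := fun h => hp (by rw [h])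
  have bool3 : ∀ a b c : Bool, a ≠ b → a ≠ c → b = c := by decide
  set v := T.vtx i with hvdef
  have hvj : T.vtx j = v := hv.symm
  have hvis : ∀ k, T.vtx k = v → k = i ∨ k = j := by
    intro k hk
    by_contra hx
    push_neg at hx
    exact T.visits_le_two hreg hE hx.1 hx.2 hij hk rfl hvj
  set d := (j - i).val with hd_def
  have hdpos : 0 < d := by
    have hji : j - i ≠ 0 := sub_ne_zero.mpr hij.symm
    exact Nat.pos_of_ne_zero (fun h => hji ((ZMod.val_eq_zero _).mp h))
  have hdN : d < N := ZMod.val_lt _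
  have hij' : i + ((d : ℕ) : ZMod N) = j := by rw [hd_def, zmod_cast_val]; ring
  set en := N - d with he_def
  have hepos : 0 < en := by omega
  have heN : en < N := by omega
  have hje : j + ((en : ℕ) : ZMod N) = i := by
    rw [he_def, Nat.cast_sub (le_of_lt hdN), ZMod.natCast_self, ← hij']; ring
  have hw1 : T.vtx (i + ((d : ℕ) : ZMod N)) = T.vtx i := by rw [hij']; exact hv.symm
  have hw2 : T.vtx (j + ((en : ℕ) : ZMod N)) = T.vtx j := by rw [hje]; exact hv
  set w₁ := T.seg i d hdpos hw1 with hw₁def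
  set w₂ := T.seg j en hepos hw2 with hw₂def
  haveI : NeZero d := ⟨hdpos.ne'⟩
  haveI : NeZero en := ⟨hepos.ne'⟩
  have huniq₁ : ∀ k : ZMod d, w₁.vtx k = v → k = 0 := by
    intro k hk
    rw [hw₁def, ClosedWalk.seg_vtx] at hk
    rcases hvis _ hk with h | h
    · have h0 : ((k.val : ℕ) : ZMod N) = ((0 : ℕ) : ZMod N) := by
        simpa using add_eq_left.mp h
      have := zmod_cast_inj (lt_trans (ZMod.val_lt k) hdN) hN h0
      exact (ZMod.val_eq_zero k).mp this
    · rw [← hij'] at h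
      have h0 : ((k.val : ℕ) : ZMod N) = ((d : ℕ) : ZMod N) := add_left_cancel h
      have := zmod_cast_inj (lt_trans (ZMod.val_lt k) hdN) hdN h0
      have hkd : k.val < d := ZMod.val_lt k
      omega
  have huniq₂ : ∀ k : ZMod en, w₂.vtx k = v → k = 0 := by
    intro k hk
    rw [hw₂def, ClosedWalk.seg_vtx] at hk
    rcases hvis _ hk with h | h
    · rw [← hje] at h
      have h0 : ((k.val : ℕ) : ZMod N) = ((en : ℕ) : ZMod N) := add_left_cancel h
      have := zmod_cast_inj (lt_trans (ZMod.val_lt k) heN) heN h0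
      have hke : k.val < en := ZMod.val_lt k
      omega
    · have h0 : ((k.val : ℕ) : ZMod N) = ((0 : ℕ) : ZMod N) := by
        simpa using add_eq_left.mp h
      have := zmod_cast_inj (lt_trans (ZMod.val_lt k) heN) hN h0
      exact (ZMod.val_eq_zero k).mp this
  have hdisj : ∀ (x y : ℕ), x < d → y < en → i + ((x : ℕ) : ZMod N) ≠ j + ((y : ℕ) : ZMod N) := by
    intro x y hx hy hxy
    rw [← hij', add_assoc] at hxy
    have h2 : ((x : ℕ) : ZMod N) = ((d + y : ℕ) : ZMod N) := by
      have := add_left_cancel hxy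
      rw [this]; push_cast; ring
    have := zmod_cast_inj (lt_trans hx hdN) (by omega : d + y < N) h2
    omega
  have hv₁0 : w₁.vtx 0 = v := by rw [hw₁def, ClosedWalk.seg_vtx_zero]
  have hv₂0 : w₂.vtx 0 = v := by rw [hw₂def, ClosedWalk.seg_vtx_zero]; exact hvj
  obtain ⟨m₁, hm₁, c₁, hs₁, hed₁, hcv₁, hce₁, hcl₁, hpass₁⟩ :=
    simplify d hdpos w₁ v hv₁0 huniq₁
  obtain ⟨m₂, hm₂, c₂, hs₂, hed₂, hcv₂, hce₂, hcl₂, hpass₂⟩ :=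
    simplify en hepos w₂ v hv₂0 huniq₂
  have hent₁ : c₁.enter 0 = T.enter j := by
    rw [hce₁, hw₁def, ClosedWalk.seg_enter_zero, hij']
  have hlv₁ : c₁.leave 0 = T.leave i := by rw [hcl₁, hw₁def, ClosedWalk.seg_leave_zero]
  have hent₂ : c₂.enter 0 = T.enter i := by
    rw [hce₂, hw₂def, ClosedWalk.seg_enter_zero, hje]
  have hlv₂ : c₂.leave 0 = T.leave j := by rw [hcl₂, hw₂def, ClosedWalk.seg_leave_zero]
  have h1 : X.p (T.leave i) = X.p (T.enter j) := bool3 _ _ _ (ht i) hp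
  have h2 : X.p (T.leave j) = X.p (T.enter i) := bool3 _ _ _ (ht j) hp.symm
  have hdisjE : EdgeDisjoint c₁ c₂ := by
    intro e' he₁ he₂
    obtain ⟨k, hk⟩ := hed₁ e' he₁
    obtain ⟨k', hk'⟩ := hed₂ e' he₂
    have heq : (T.dart (i + ((k.val : ℕ) : ZMod N))).1
        = (T.dart (j + ((k'.val : ℕ) : ZMod N))).1 := hk.trans hk'.symm
    have := T.eul_inj hE heq
    exact hdisj k.val k'.val (ZMod.val_lt k) (ZMod.val_lt k') this
  apply hno
  refine ⟨m₁, m₂, hm₁, hm₂, c₁, c₂, hs₁, hs₂, hdisjE, v, ⟨0, 0, hcv₁, hcv₂, ?_, ?_, ?_⟩, ?_⟩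
  · rw [hent₁, hlv₁]
    exact h1.symm
  · rw [hent₂, hlv₂]
    exact h2.symm
  · rw [hlv₁, hlv₂, h1, h2]
    exact hp.symm
  · rintro u ⟨k, l, hku, hlu, hpk, hpl2, hne⟩
    by_cases hk0 : k = 0
    · rw [← hku, hk0, hcv₁]
    · by_cases hl0 : l = 0
      · rw [← hlu, hl0, hcv₂]
      · exfalso
        obtain ⟨⟨α, hα0, hαv, hαe⟩, ⟨α', hα'0, hα'v, hα'l⟩⟩ := hpass₁ k hk0
        obtain ⟨⟨β, hβ0, hβv, hβe⟩, -⟩ := hpass₂ l hl0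
        set t₁ := i + ((α.val : ℕ) : ZMod N) with ht₁def
        set t₂ := i + ((α'.val : ℕ) : ZMod N) with ht₂def
        set t₃ := j + ((β.val : ℕ) : ZMod N) with ht₃def
        have hvt₁ : T.vtx t₁ = u := by
          rw [ht₁def, ← ClosedWalk.seg_vtx T i d hdpos hw1 α, ← hw₁def, hαv, hku]
        have hvt₂ : T.vtx t₂ = u := by
          rw [ht₂def, ← ClosedWalk.seg_vtx T i d hdpos hw1 α', ← hw₁def, hα'v, hku]
        have hvt₃ : T.vtx t₃ = u := by
          rw [ht₃def, ← ClosedWalk.seg_vtx T j en hepos hw2 β, ← hw₂def, hβv, hlu]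
        have h13 : t₁ ≠ t₃ := hdisj α.val β.val (ZMod.val_lt α) (ZMod.val_lt β)
        have h23 : t₂ ≠ t₃ := hdisj α'.val β.val (ZMod.val_lt α') (ZMod.val_lt β)
        by_cases h12 : t₁ = t₂
        · have hαα : α = α' := by
            have h0 : ((α.val : ℕ) : ZMod N) = ((α'.val : ℕ) : ZMod N) := add_left_cancel h12
            exact zmod_val_inj
              (zmod_cast_inj (lt_trans (ZMod.val_lt α) hdN) (lt_trans (ZMod.val_lt α') hdN) h0)
          have he' : c₁.enter k = T.enter t₁ := by
            rw [hαe, hw₁def, ClosedWalk.seg_enter T i d hdpos hw1 α hα0, ht₁def]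
          have hl' : c₁.leave k = T.leave t₁ := by
            rw [hα'l, ← hαα, hw₁def, ClosedWalk.seg_leave T i d hdpos hw1 α, ht₁def]
          exact ht t₁ (by rw [← he', ← hl']; exact hpk)
        · exact T.visits_le_two hreg hE h12 h13 h23 hvt₁ hvt₂ hvt₃
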